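/- Let l be the least common denominator of the right-hand sides b_1,…,b_m in the irredundant facet description of P. Then int(lP) ∩ ℤ^n = (lP)^(1) ∩ ℤ^n. In particular, μ(P) ≤ l·cd(P); and if P is a lattice polytope (so l = 1), then μ(P) ≤ cd(P). -/

import Mathlib

open scoped BigOperators Pointwise

noncomputable section

/-- Pairing `⟨a, x⟩ = ∑ aⱼ xⱼ` of an integer linear functional with a real point. -/
def ipair {n : ℕ} (a : Fin n → ℤ) (x : Fin n → ℝ) : ℝ := ∑ j, (a j : ℝ) * x j

/-- An integer vector is primitive if it is nonzero and not a nontrivial integer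
multiple of another integer vector. -/
def IsPrimitive {n : ℕ} (a : Fin n → ℤ) : Prop :=
  a ≠ 0 ∧ ∀ (k : ℤ) (b : Fin n → ℤ), a = k • b → IsUnit k

/-- The set of integer (lattice) points of `ℝⁿ`. -/
def IntPts (n : ℕ) : Set (Fin n → ℝ) := Set.range (fun z : Fin n → ℤ => fun j => (z j : ℝ))

/-- The dimension of a subset of `ℝⁿ` (the dimension of its affine hull). -/
def setDim {n : ℕ} (S : Set (Fin n → ℝ)) : ℕ := Module.finrank ℝ (vectorSpan ℝ S)

/-- An irredundant facet description `P = {x : A x ≥ b}` of an `n`-dimensional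
rational polytope: the rows `aᵢ` of `A` are primitive integer vectors, the right hand
sides are rational, `P` is bounded and `n`-dimensional, every inequality defines a facet
(a face of dimension `n-1`), and no inequality is repeated. -/
structure PolyDesc (n m : ℕ) : Type where
  hm : 0 < m
  A : Fin m → Fin n → ℤ
  b : Fin m → ℚ
  prim : ∀ i, IsPrimitive (A i)
  bounded : Bornology.IsBounded {x : Fin n → ℝ | ∀ i, (b i : ℝ) ≤ ipair (A i) x}
  fulldim : setDim {x : Fin n → ℝ | ∀ i, (b i : ℝ) ≤ ipair (A i) x} = n
  facet_dim : ∀ i, setDim {x : Fin n → ℝ |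
      (∀ j, (b j : ℝ) ≤ ipair (A j) x) ∧ ipair (A i) x = (b i : ℝ)} + 1 = n
  irredundant : Function.Injective (fun i => (A i, b i))

namespace PolyDesc

variable {n m : ℕ} (D : PolyDesc n m)

/-- The polytope `P` itself. -/
def pts : Set (Fin n → ℝ) := {x | ∀ i, (D.b i : ℝ) ≤ ipair (D.A i) x}

/-- Lattice distance `d_{Fᵢ}(x) = ⟨aᵢ, x⟩ - bᵢ` from (the hyperplane spanned by)
the `i`-th facet. -/
def dF (i : Fin m) (x : Fin n → ℝ) : ℝ := ipair (D.A i) x - (D.b i : ℝ)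

/-- Lattice distance `d_P(x) = minᵢ d_{Fᵢ}(x)` from the boundary of `P`. -/
def dist (x : Fin n → ℝ) : ℝ :=
  Finset.univ.inf'
    (Finset.univ_nonempty_iff.mpr (Fin.pos_iff_nonempty.mp D.hm))
    (fun i => D.dF i x)

/-- The adjoint polytope `P⁽ˢ⁾ = {x : d_P(x) ≥ s}`. -/
def adj (s : ℝ) : Set (Fin n → ℝ) := {x | s ≤ D.dist x}

/-- The `i`-th facet `Fᵢ` of `P`. -/
def facet (i : Fin m) : Set (Fin n → ℝ) := {x ∈ D.pts | ipair (D.A i) x = (D.b i : ℝ)}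

/-- The set `{s > 0 : P⁽ˢ⁾ ≠ ∅}`, whose supremum is `μ(P)⁻¹`. -/
def qcdInvSet : Set ℝ := {s : ℝ | 0 < s ∧ (D.adj s).Nonempty}

/-- `μ(P)⁻¹ = sup {s > 0 : P⁽ˢ⁾ ≠ ∅}`. -/
def qcdInv : ℝ := sSup D.qcdInvSet

/-- The ℚ-codegree `μ(P) = (sup {s > 0 : P⁽ˢ⁾ ≠ ∅})⁻¹`. -/
def qcd : ℝ := D.qcdInv⁻¹

/-- The core `core(P) = P^{(1/μ(P))}`. -/
def core : Set (Fin n → ℝ) := D.adj D.qcdInv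

/-- The codegree `cd(P) = min {k ∈ ℕ, k ≥ 1 : int(kP) ∩ ℤⁿ ≠ ∅}`. -/
def codeg : ℕ := sInf {k : ℕ | 0 < k ∧
  ∃ z : Fin n → ℤ, (fun j => (z j : ℝ)) ∈ interior ((k : ℝ) • D.pts)}

end PolyDesc

/-- The face of `S` on which the linear functional `u` is maximized. -/
def argFace {n : ℕ} (S : Set (Fin n → ℝ)) (u : Fin n → ℝ) : Set (Fin n → ℝ) :=
  {x ∈ S | ∀ y ∈ S, ∑ j, u j * y j ≤ ∑ j, u j * x j}

/-- `S` and `T` have the same normal fan: two linear functionals lie in the same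
(relatively open) cone of the normal fan of `S`, i.e. are maximized on the same face
of `S`, iff the same holds for `T`. -/
def SameNormalFan {n : ℕ} (S T : Set (Fin n → ℝ)) : Prop :=
  ∀ u v : Fin n → ℝ, (argFace S u = argFace S v ↔ argFace T u = argFace T v)

/-- The normal fan of `S` refines the normal fan of `T`. -/
def RefinesNormalFan {n : ℕ} (S T : Set (Fin n → ℝ)) : Prop :=
  ∀ u v : Fin n → ℝ, argFace S u = argFace S v → argFace T u = argFace T v

namespace PolyDesc
variable {n m : ℕ} (D : PolyDesc n m)

/-- `{s > 0 : N(P⁽ˢ⁾) = N(P)}`, whose supremum is `τ(P)⁻¹`. -/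
def nefInvSet : Set ℝ := {s : ℝ | 0 < s ∧ SameNormalFan (D.adj s) D.pts}

/-- `τ(P)⁻¹ = sup {s > 0 : N(P⁽ˢ⁾) = N(P)}`. -/
def nefInv : ℝ := sSup D.nefInvSet

/-- The nef value `τ(P)`. -/
def nefVal : ℝ := D.nefInv⁻¹

/-- The set of inequalities active at `x`; the normal cone of the minimal face of `P`
containing `x` is generated by `{aᵢ : i ∈ active x}`, and all cones of the normal fan
of `P` arise in this way. -/
def active (x : Fin n → ℝ) : Set (Fin m) := {i | ipair (D.A i) x = (D.b i : ℝ)}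

/-- The normal cone at the vertex `v` is ℚ-Gorenstein of index `r`, witnessed by the
primitive lattice point `u = u_σ` with `⟨aᵢ, u⟩ = r` for all active `i`. -/
def VertexQG (v : Fin n → ℝ) (u : Fin n → ℤ) (r : ℤ) : Prop :=
  IsPrimitive u ∧ 0 < r ∧ ∀ i ∈ D.active v, (∑ j, D.A i j * u j) = r

/-- The normal fan of `P` is ℚ-Gorenstein: every maximal cone (normal cone of a
vertex, i.e. of an extreme point) is ℚ-Gorenstein. -/
def QGorenstein : Prop := ∀ v ∈ Set.extremePoints ℝ D.pts, ∃ u r, D.VertexQG v u r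

end PolyDesc

/-- The point `v(s) = v + (s/r_σ) • u_σ`. -/
def vmove {n : ℕ} (v : Fin n → ℝ) (s : ℝ) (u : Fin n → ℤ) (r : ℤ) : Fin n → ℝ :=
  v + (s / (r : ℝ)) • (fun j => ((u j : ℝ)))

/-- The height of a point `y` in the cone generated by `{aᵢ : i ∈ I}`:
`ht(y) = max {∑ λᵢ : λᵢ ≥ 0, ∑ λᵢ aᵢ = y}`. -/
def coneHeight {n m : ℕ} (D : PolyDesc n m) (I : Set (Fin m)) (y : Fin n → ℝ) : ℝ :=
  sSup {t : ℝ | ∃ c : Fin m → ℝ, (∀ i, 0 ≤ c i) ∧ (∀ i ∉ I, c i = 0) ∧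
    (y = ∑ i, c i • (fun j => ((D.A i j : ℝ)))) ∧ t = ∑ i, c i}

/-- `P` is α-canonical: for every cone `σ` of the normal fan of `P` (the normal cone
of the minimal face containing a point `x ∈ P`, generated by `{aᵢ : i ∈ active x}`),
every nonzero lattice point of `σ` has height at least `α`. -/
def AlphaCanonical {n m : ℕ} (D : PolyDesc n m) (α : ℝ) : Prop :=
  ∀ x ∈ D.pts, ∀ z : Fin n → ℤ, z ≠ 0 →
    (∃ c : Fin m → ℝ, (∀ i, 0 ≤ c i) ∧ (∀ i ∉ D.active x, c i = 0) ∧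
      ((fun j => ((z j : ℝ))) = ∑ i, c i • (fun j => ((D.A i j : ℝ))))) →
    α ≤ coneHeight D (D.active x) (fun j => ((z j : ℝ)))

/-- `P` is a lattice polytope: the convex hull of finitely many integer points. -/
def IsLatticePoly {n : ℕ} (P : Set (Fin n → ℝ)) : Prop :=
  ∃ V : Finset (Fin n → ℤ),
    P = convexHull ℝ ((fun z : Fin n → ℤ => fun j => ((z j : ℝ))) '' (V : Set (Fin n → ℤ)))

/-- The `i`-th standard basis vector of `ℝᵗ`. -/
def stdBasisVec (t : ℕ) (i : Fin t) : Fin t → ℝ := fun j => if j = i then 1 else 0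

/-- The marking vectors of a Cayley sum: `0, e₁, …, e_t ∈ ℝᵗ`. -/
def cayleyVec (t : ℕ) : Fin (t + 1) → (Fin t → ℝ) :=
  fun j => if h : (j : ℕ) = 0 then 0 else stdBasisVec t ⟨(j : ℕ) - 1, by have := j.isLt; omega⟩

/-- The Cayley sum `Q₀ * ⋯ * Q_t = conv((Q₀ × {0}) ∪ (Q₁ × {e₁}) ∪ ⋯ ∪ (Q_t × {e_t}))`. -/
def cayleySum {k t : ℕ} (Q : Fin (t + 1) → Set (Fin k → ℝ)) :
    Set ((Fin k → ℝ) × (Fin t → ℝ)) :=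
  convexHull ℝ (⋃ j, (Q j) ×ˢ ({cayleyVec t j} : Set (Fin t → ℝ)))

/-- `P ⊆ ℝⁿ` is a Cayley polytope `P₀ * ⋯ * P_t` of length `t+1` of lattice polytopes
`Pⱼ ⊆ ℝᵏ` with `k + t = n`: some affine lattice isomorphism `ℤⁿ ≅ ℤᵏ × ℤᵗ`
identifies `P` with such a Cayley sum. -/
def IsCayley {n : ℕ} (P : Set (Fin n → ℝ)) (k t : ℕ) : Prop :=
  k + t = n ∧
  ∃ Q : Fin (t + 1) → Finset (Fin k → ℤ), (∀ j, (Q j).Nonempty) ∧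
  ∃ f : (Fin n → ℝ) ≃ᵃ[ℝ] (Fin k → ℝ) × (Fin t → ℝ),
    f '' IntPts n = (IntPts k) ×ˢ (IntPts t) ∧
    f '' P = cayleySum (fun j =>
      convexHull ℝ ((fun z : Fin k → ℤ => fun i => ((z i : ℝ))) '' (Q j : Set (Fin k → ℤ))))

/-- The unimodular simplex `Δₙ = conv(0, e₁, …, eₙ)`. -/
def unimodSimplex (n : ℕ) : Set (Fin n → ℝ) :=
  convexHull ℝ (insert (0 : Fin n → ℝ) (Set.range (stdBasisVec n)))

/-- Two subsets of `ℝⁿ` are unimodularly equivalent: an affine lattice automorphism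
maps one onto the other. -/
def UnimodEquiv {n : ℕ} (P P' : Set (Fin n → ℝ)) : Prop :=
  ∃ f : (Fin n → ℝ) ≃ᵃ[ℝ] (Fin n → ℝ), f '' IntPts n = IntPts n ∧ f '' P = P'

/-- The codegree `cd(P) = min {k ∈ ℕ, k ≥ 1 : int(kP) ∩ ℤⁿ ≠ ∅}` of a polytope given
as a set. -/
def codegS {n : ℕ} (P : Set (Fin n → ℝ)) : ℕ :=
  sInf {k : ℕ | 0 < k ∧ ∃ z : Fin n → ℤ, (fun j => (z j : ℝ)) ∈ interior ((k : ℝ) • P)}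

/-- `P` has lattice width one: some nonzero integer linear functional has minimum `c`
and maximum `c + 1` on `P`. -/
def HasLatticeWidthOne {n : ℕ} (P : Set (Fin n → ℝ)) : Prop :=
  ∃ u : Fin n → ℤ, u ≠ 0 ∧ ∃ c : ℤ,
    (∀ x ∈ P, (c : ℝ) ≤ ipair u x ∧ ipair u x ≤ (c : ℝ) + 1) ∧
    (∃ x ∈ P, ipair u x = (c : ℝ)) ∧ (∃ x ∈ P, ipair u x = (c : ℝ) + 1)

/-- `P` is a lattice pyramid: for some primitive `u`, `P` is the convex hull of a base
lying in the lattice hyperplane `{⟨u, ·⟩ = c}` and an apex at lattice distance one from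
it (this is equivalent to being unimodularly equivalent to
`conv((Q × {0}) ∪ {(0, …, 0, 1)})` for an `(n-1)`-dimensional lattice polytope `Q`). -/
def IsLatticePyramid {n : ℕ} (P : Set (Fin n → ℝ)) : Prop :=
  ∃ u : Fin n → ℤ, IsPrimitive u ∧ ∃ c : ℤ, ∃ apex ∈ P,
    ipair u apex = (c : ℝ) + 1 ∧
    P = convexHull ℝ ({x ∈ P | ipair u x = (c : ℝ)} ∪ {apex})

/-- `F` is a facet of `S`: an exposed face of dimension `dim S - 1`. -/
def IsFacetOf {n : ℕ} (F S : Set (Fin n → ℝ)) : Prop :=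
  IsExposed ℝ S F ∧ F.Nonempty ∧ setDim F + 1 = setDim S

section AuxLemmas

lemma ipair_smul' {n : ℕ} (a : Fin n → ℤ) (c : ℝ) (x : Fin n → ℝ) :
    ipair a (c • x) = c * ipair a x := by
  simp only [ipair, Finset.mul_sum, Pi.smul_apply, smul_eq_mul]
  exact Finset.sum_congr rfl fun j _ => by ring

lemma ipair_sub' {n : ℕ} (a : Fin n → ℤ) (x y : Fin n → ℝ) :
    ipair a (x - y) = ipair a x - ipair a y := by
  simp only [ipair, ← Finset.sum_sub_distrib, Pi.sub_apply]
  exact Finset.sum_congr rfl fun j _ => by ring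

lemma ipair_add' {n : ℕ} (a : Fin n → ℤ) (x y : Fin n → ℝ) :
    ipair a (x + y) = ipair a x + ipair a y := by
  simp only [ipair, ← Finset.sum_add_distrib, Pi.add_apply]
  exact Finset.sum_congr rfl fun j _ => by ring

lemma ipair_cast' {n : ℕ} (a : Fin n → ℤ) (z : Fin n → ℤ) :
    ipair a (fun j => ((z j : ℝ))) = ((∑ j, a j * z j : ℤ) : ℝ) := by
  push_cast [ipair]; rfl

lemma continuous_ipair' {n : ℕ} (a : Fin n → ℤ) : Continuous (ipair a) := by
  unfold ipair
  exact continuous_finset_sum _ fun j _ => (continuous_const.mul (continuous_apply j))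

lemma smul_halfspaces' {n m : ℕ} (A : Fin m → Fin n → ℤ) (β : Fin m → ℝ) {c : ℝ} (hc : 0 < c) :
    c • {x : Fin n → ℝ | ∀ i, β i ≤ ipair (A i) x}
      = {x : Fin n → ℝ | ∀ i, c * β i ≤ ipair (A i) x} := by
  ext x
  rw [Set.mem_smul_set_iff_inv_smul_mem₀ (ne_of_gt hc)]
  simp only [Set.mem_setOf_eq, ipair_smul']
  constructor
  · intro h i
    have := h i
    calc c * β i ≤ c * (c⁻¹ * ipair (A i) x) :=
          mul_le_mul_of_nonneg_left this (le_of_lt hc)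
      _ = ipair (A i) x := by field_simp
  · intro h i
    have := h i
    calc β i = c⁻¹ * (c * β i) := by field_simp
      _ ≤ c⁻¹ * ipair (A i) x := mul_le_mul_of_nonneg_left this (by positivity)

lemma convex_halfspaces' {n m : ℕ} (A : Fin m → Fin n → ℤ) (β : Fin m → ℝ) :
    Convex ℝ {x : Fin n → ℝ | ∀ i, β i ≤ ipair (A i) x} := by
  intro x hx y hy a b ha hb hab
  intro i
  have : ipair (A i) (a • x + b • y) = a * ipair (A i) x + b * ipair (A i) y := by
    rw [ipair_add', ipair_smul', ipair_smul']
  show β i ≤ ipair (A i) (a • x + b • y)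
  rw [this]
  calc β i = a * β i + b * β i := by rw [← add_mul, hab, one_mul]
    _ ≤ a * ipair (A i) x + b * ipair (A i) y :=
        add_le_add (mul_le_mul_of_nonneg_left (hx i) ha) (mul_le_mul_of_nonneg_left (hy i) hb)

lemma interior_halfspaces' {n m : ℕ} (A : Fin m → Fin n → ℤ) (hA : ∀ i, A i ≠ 0) (β : Fin m → ℝ) :
    interior {x : Fin n → ℝ | ∀ i, β i ≤ ipair (A i) x}
      = {x : Fin n → ℝ | ∀ i, β i < ipair (A i) x} := by
  apply le_antisymm
  · intro x hx
    have hnhds : {x : Fin n → ℝ | ∀ i, β i ≤ ipair (A i) x} ∈ nhds x :=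
      mem_interior_iff_mem_nhds.mp hx
    obtain ⟨ε, hε, hball⟩ := Metric.mem_nhds_iff.mp hnhds
    intro i
    obtain ⟨j, hj⟩ := Function.ne_iff.mp (hA i)
    set e : Fin n → ℝ := fun j' => if j' = j then 1 else 0 with he
    set c : ℝ := (ε / 2) / (A i j : ℝ) with hcdef
    have haj : (A i j : ℝ) ≠ 0 := Int.cast_ne_zero.mpr hj
    have habs : (1 : ℝ) ≤ |(A i j : ℝ)| := by
      have : (1 : ℤ) ≤ |A i j| := Int.one_le_abs hj
      exact_mod_cast this
    set y : Fin n → ℝ := x - c • e with hy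
    have hmem : y ∈ Metric.ball x ε := by
      rw [Metric.mem_ball, dist_pi_lt_iff hε]
      intro j'
      simp only [hy, Pi.sub_apply, Pi.smul_apply, smul_eq_mul, Real.dist_eq]
      by_cases h : j' = j
      · simp only [he, h, if_pos rfl, mul_one]
        rw [sub_sub_cancel_left, abs_neg, hcdef, abs_div]
        calc |ε / 2| / |(A i j : ℝ)| ≤ |ε / 2| / 1 :=
              div_le_div_of_nonneg_left (abs_nonneg _) one_pos habs
          _ = ε / 2 := by rw [div_one, abs_of_pos (by linarith)]
          _ < ε := by linarith
      · simp [he, h, hε]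
    have hyset := hball hmem i
    have hipy : ipair (A i) y = ipair (A i) x - ε / 2 := by
      rw [hy, ipair_sub', ipair_smul']
      have : ipair (A i) e = (A i j : ℝ) := by
        simp [ipair, he, mul_ite, Finset.sum_ite_eq']
      rw [this, hcdef]
      field_simp
    rw [hipy] at hyset
    linarith
  · apply interior_maximal
    · intro x hx i
      exact le_of_lt (hx i)
    · have : {x : Fin n → ℝ | ∀ i, β i < ipair (A i) x}
          = ⋂ i, (ipair (A i)) ⁻¹' (Set.Ioi (β i)) := by
        ext x; simp [Set.mem_iInter]
      rw [this]
      exact isOpen_iInter_of_finite fun i => (isOpen_Ioi).preimage (continuous_ipair' _)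

namespace PolyDesc

lemma A_ne_zero {n m : ℕ} (D : PolyDesc n m) (i : Fin m) : D.A i ≠ 0 := (D.prim i).1

lemma pts_eq {n m : ℕ} (D : PolyDesc n m) :
    D.pts = {x : Fin n → ℝ | ∀ i, ((D.b i : ℝ)) ≤ ipair (D.A i) x} := rfl

lemma one_le_n' {n m : ℕ} (D : PolyDesc n m) : 1 ≤ n := by
  have := D.facet_dim ⟨0, D.hm⟩
  omega

lemma exists_strict_point {n m : ℕ} (D : PolyDesc n m) :
    ∃ x : Fin n → ℝ, ∀ i, (D.b i : ℝ) < ipair (D.A i) x := by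
  have hne : D.pts.Nonempty := by
    by_contra h
    rw [Set.not_nonempty_iff_eq_empty] at h
    have hfd := D.fulldim
    rw [show {x : Fin n → ℝ | ∀ i, ((D.b i : ℝ)) ≤ ipair (D.A i) x} = D.pts from rfl, h] at hfd
    have h1 := D.one_le_n'
    rw [setDim, vectorSpan_empty] at hfd
    simp [finrank_bot] at hfd
    omega
  have hvs : vectorSpan ℝ D.pts = ⊤ := by
    apply Submodule.eq_top_of_finrank_eq
    rw [show Module.finrank ℝ (vectorSpan ℝ D.pts) = setDim D.pts from rfl]
    rw [show setDim D.pts = n from D.fulldim]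
    simp [Module.finrank_pi]
  have haff : affineSpan ℝ D.pts = ⊤ :=
    (AffineSubspace.affineSpan_eq_top_iff_vectorSpan_eq_top_of_nonempty ℝ (Fin n → ℝ) (Fin n → ℝ) hne).mpr hvs
  have hconv : Convex ℝ D.pts := convex_halfspaces' D.A _
  have hint : (interior D.pts).Nonempty :=
    (Convex.interior_nonempty_iff_affineSpan_eq_top hconv).mpr haff
  obtain ⟨x, hx⟩ := hint
  rw [pts_eq, interior_halfspaces' D.A D.A_ne_zero] at hx
  exact ⟨x, hx⟩

lemma interior_smul_pts {n m : ℕ} (D : PolyDesc n m) {c : ℝ} (hc : 0 < c) :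
    interior (c • D.pts) = {x : Fin n → ℝ | ∀ i, c * (D.b i : ℝ) < ipair (D.A i) x} := by
  rw [pts_eq, smul_halfspaces' D.A _ hc, interior_halfspaces' D.A D.A_ne_zero]

lemma codeg_spec {n m : ℕ} (D : PolyDesc n m) :
    0 < D.codeg ∧ ∃ z : Fin n → ℤ,
      (fun j => ((z j : ℝ))) ∈ interior ((D.codeg : ℝ) • D.pts) := by
  have hne : {k : ℕ | 0 < k ∧ ∃ z : Fin n → ℤ,
      (fun j => ((z j : ℝ))) ∈ interior ((k : ℝ) • D.pts)}.Nonempty := by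
    obtain ⟨x, hx⟩ := D.exists_strict_point
    have hmne : (Finset.univ : Finset (Fin m)).Nonempty :=
      Finset.univ_nonempty_iff.mpr (Fin.pos_iff_nonempty.mp D.hm)
    set δ : ℝ := Finset.univ.inf' hmne (fun i => ipair (D.A i) x - (D.b i : ℝ)) with hδ
    have hδpos : 0 < δ := by
      rw [hδ, Finset.lt_inf'_iff]
      exact fun i _ => sub_pos.mpr (hx i)
    set C : ℝ := Finset.univ.sup' hmne (fun i => ∑ j, |(D.A i j : ℝ)|) with hC
    obtain ⟨k₀, hk₀⟩ := exists_nat_gt (C / δ)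
    set k : ℕ := k₀ + 1 with hk
    have hkpos : 0 < k := Nat.succ_pos _
    have hkr : (0:ℝ) < (k:ℝ) := by exact_mod_cast hkpos
    have hkδ : C < (k:ℝ) * δ := by
      have h1 : C / δ < (k:ℝ) := by
        have : (k₀:ℝ) ≤ (k:ℝ) := by exact_mod_cast Nat.le_succ _
        linarith
      calc C = (C / δ) * δ := by field_simp
        _ < (k:ℝ) * δ := mul_lt_mul_of_pos_right h1 hδpos
    refine ⟨k, hkpos, fun j => ⌊(k : ℝ) * x j⌋, ?_⟩
    rw [D.interior_smul_pts hkr]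
    intro i
    have hbound : ∀ j, -|(D.A i j : ℝ)|
        ≤ (D.A i j : ℝ) * ((⌊(k : ℝ) * x j⌋ : ℝ) - (k:ℝ) * x j) := by
      intro j
      have h1 : |(⌊(k : ℝ) * x j⌋ : ℝ) - (k:ℝ) * x j| ≤ 1 := by
        rw [abs_le]
        constructor
        · linarith [Int.sub_one_lt_floor ((k : ℝ) * x j)]
        · linarith [Int.floor_le ((k : ℝ) * x j)]
      calc -|(D.A i j : ℝ)| = -(|(D.A i j : ℝ)| * 1) := by ring
        _ ≤ -(|(D.A i j : ℝ)| * |(⌊(k : ℝ) * x j⌋ : ℝ) - (k:ℝ) * x j|) :=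
            neg_le_neg (mul_le_mul_of_nonneg_left h1 (abs_nonneg _))
        _ = -|(D.A i j : ℝ) * ((⌊(k : ℝ) * x j⌋ : ℝ) - (k:ℝ) * x j)| := by rw [abs_mul]
        _ ≤ _ := neg_abs_le _
    have hdiff : ipair (D.A i) (fun j => ((⌊(k : ℝ) * x j⌋ : ℝ))) - (k:ℝ) * ipair (D.A i) x
        = ∑ j, (D.A i j : ℝ) * ((⌊(k : ℝ) * x j⌋ : ℝ) - (k:ℝ) * x j) := by
      simp only [ipair, Finset.mul_sum, ← Finset.sum_sub_distrib]
      exact Finset.sum_congr rfl fun j _ => by ring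
    have h2 : ∑ j, -|(D.A i j : ℝ)|
        ≤ ∑ j, (D.A i j : ℝ) * ((⌊(k : ℝ) * x j⌋ : ℝ) - (k:ℝ) * x j) :=
      Finset.sum_le_sum (fun j _ => hbound j)
    have h3 : (∑ j, |(D.A i j : ℝ)|) ≤ C := by
      rw [hC]; exact Finset.le_sup' (fun i => ∑ j, |(D.A i j : ℝ)|) (Finset.mem_univ i)
    have h4 : δ ≤ ipair (D.A i) x - (D.b i : ℝ) := Finset.inf'_le _ (Finset.mem_univ i)
    have h5 : ∑ j, -|(D.A i j : ℝ)| = -(∑ j, |(D.A i j : ℝ)|) := by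
      rw [Finset.sum_neg_distrib]
    have h6 : (k:ℝ) * ((D.b i : ℝ) + δ) ≤ (k:ℝ) * ipair (D.A i) x :=
      mul_le_mul_of_nonneg_left (by linarith) (le_of_lt hkr)
    have := hdiff ▸ h2
    nlinarith [hkδ, h3, h6]
  have hmem := Nat.sInf_mem hne
  exact ⟨hmem.1, hmem.2⟩

lemma bddAbove_qcdInvSet {n m : ℕ} (D : PolyDesc n m) : BddAbove D.qcdInvSet := by
  obtain ⟨R, hR⟩ := D.bounded.subset_closedBall 0
  set i0 : Fin m := ⟨0, D.hm⟩ with hi0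
  set R' : ℝ := max R 0 with hR'
  refine ⟨(∑ j, |(D.A i0 j : ℝ)|) * R' + |(D.b i0 : ℝ)|, ?_⟩
  rintro s ⟨hs, x, hx⟩
  have hdx : s ≤ D.dist x := hx
  have hds : ∀ i, s ≤ D.dF i x := fun i =>
    le_trans hdx (Finset.inf'_le _ (Finset.mem_univ i))
  have hxP : x ∈ {x : Fin n → ℝ | ∀ i, (D.b i : ℝ) ≤ ipair (D.A i) x} := by
    intro i
    have := hds i
    rw [PolyDesc.dF] at this
    linarith
  have hxball := hR hxP
  have hxj : ∀ j, |x j| ≤ R' := by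
    intro j
    have h1 : Dist.dist (x j) ((0 : Fin n → ℝ) j) ≤ Dist.dist x (0 : Fin n → ℝ) :=
      dist_le_pi_dist x 0 j
    have h2 : Dist.dist x (0 : Fin n → ℝ) ≤ R := Metric.mem_closedBall.mp hxball
    simp only [Pi.zero_apply, Real.dist_eq, sub_zero] at h1
    exact le_trans h1 (le_trans h2 (le_max_left _ _))
  have hip : ipair (D.A i0) x ≤ (∑ j, |(D.A i0 j : ℝ)|) * R' := by
    rw [ipair, Finset.sum_mul]
    apply Finset.sum_le_sum
    intro j _
    calc (D.A i0 j : ℝ) * x j ≤ |(D.A i0 j : ℝ) * x j| := le_abs_self _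
      _ = |(D.A i0 j : ℝ)| * |x j| := abs_mul _ _
      _ ≤ |(D.A i0 j : ℝ)| * R' := mul_le_mul_of_nonneg_left (hxj j) (abs_nonneg _)
  have := hds i0
  rw [PolyDesc.dF] at this
  have hb : -(D.b i0 : ℝ) ≤ |(D.b i0 : ℝ)| := neg_le_abs _
  linarith

lemma qcd_le_inv' {n m : ℕ} (D : PolyDesc n m) {s : ℝ} (hs : 0 < s)
    (h : (D.adj s).Nonempty) : D.qcd ≤ s⁻¹ := by
  have hmem : s ∈ D.qcdInvSet := ⟨hs, h⟩
  have hle : s ≤ D.qcdInv := le_csSup D.bddAbove_qcdInvSet hmem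
  exact inv_anti₀ hs hle

lemma qcd_le_of_forall {n m : ℕ} (D : PolyDesc n m) {s : ℝ} (hs : 0 < s)
    {x : Fin n → ℝ} (hx : ∀ i, s ≤ D.dF i x) : D.qcd ≤ s⁻¹ := by
  apply D.qcd_le_inv' hs
  refine ⟨x, ?_⟩
  show s ≤ D.dist x
  rw [PolyDesc.dist]
  rw [Finset.le_inf'_iff]
  exact fun i _ => hx i

end PolyDesc

end AuxLemmas

/-- Let `l` be the least common denominator of the right hand sides
`b₁, …, b_m`. Then `int(lP) ∩ ℤⁿ = (lP)⁽¹⁾ ∩ ℤⁿ` (note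
`(lP)⁽¹⁾ = {x : ⟨aᵢ, x⟩ ≥ l bᵢ + 1 for all i}`). In particular `μ(P) ≤ l · cd(P)`,
and if `P` is a lattice polytope (so that `l = 1`), then `μ(P) ≤ cd(P)`. -/
theorem statement3 {n m : ℕ} (D : PolyDesc n m) (l : ℕ)
    (hl : l = Finset.univ.lcm (fun i => (D.b i).den)) :
    {z : Fin n → ℤ | (fun j => ((z j : ℝ))) ∈ interior ((l : ℝ) • D.pts)} =
      {z : Fin n → ℤ | ∀ i,
        (l : ℝ) * (D.b i : ℝ) + 1 ≤ ipair (D.A i) (fun j => ((z j : ℝ)))} ∧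
    D.qcd ≤ (l : ℝ) * (D.codeg : ℝ) ∧
    (IsLatticePoly D.pts → D.qcd ≤ (D.codeg : ℝ)) := by
  have hl0 : 0 < l := by
    rw [hl]
    rcases Nat.eq_zero_or_pos (Finset.univ.lcm fun i => (D.b i).den) with h | h
    · exfalso
      rw [Finset.lcm_eq_zero_iff] at h
      obtain ⟨i, -, hi⟩ := h
      exact (D.b i).den_nz hi
    · exact h
  have hlr : (0:ℝ) < (l:ℝ) := by exact_mod_cast hl0
  have hint : ∀ i : Fin m, ∃ B : ℤ, (l:ℝ) * (D.b i : ℝ) = (B:ℝ) := by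
    intro i
    obtain ⟨c, hc⟩ : (D.b i).den ∣ l := hl ▸ Finset.dvd_lcm (Finset.mem_univ i)
    refine ⟨(c:ℤ) * (D.b i).num, ?_⟩
    have hq : (l:ℚ) * D.b i = (((c:ℤ) * (D.b i).num : ℤ) : ℚ) := by
      have hden : ((D.b i).den : ℚ) * D.b i = ((D.b i).num : ℚ) := by
        rw [mul_comm]
        exact_mod_cast Rat.mul_den_eq_num (D.b i)
      rw [hc]
      push_cast
      rw [mul_comm ((D.b i).den : ℚ) (c : ℚ), mul_assoc, hden]
    have : ((l:ℚ) * D.b i : ℚ) = (((c:ℤ) * (D.b i).num : ℤ) : ℚ) := hq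
    exact_mod_cast congrArg (fun q : ℚ => (q : ℝ)) this
  have hset : ∀ z : Fin n → ℤ,
      ((fun j => ((z j : ℝ))) ∈ interior ((l : ℝ) • D.pts)) ↔
      (∀ i, (l : ℝ) * (D.b i : ℝ) + 1 ≤ ipair (D.A i) (fun j => ((z j : ℝ)))) := by
    intro z
    rw [D.interior_smul_pts hlr]
    simp only [Set.mem_setOf_eq]
    refine forall_congr' fun i => ?_
    obtain ⟨B, hB⟩ := hint i
    rw [hB, ipair_cast']
    constructor
    · intro h
      have h1 : B < ∑ j, D.A i j * z j := by exact_mod_cast h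
      have h2 : B + 1 ≤ ∑ j, D.A i j * z j := Int.add_one_le_iff.mpr h1
      exact_mod_cast h2
    · intro h
      have h2 : B + 1 ≤ ∑ j, D.A i j * z j := by exact_mod_cast h
      have h1 : B < ∑ j, D.A i j * z j := Int.lt_of_add_one_le h2
      exact_mod_cast h1
  obtain ⟨hc0, z, hz0⟩ := D.codeg_spec
  have hcr : (0:ℝ) < (D.codeg : ℝ) := by exact_mod_cast hc0
  refine ⟨?_, ?_, ?_⟩
  · ext z'
    simp only [Set.mem_setOf_eq]
    exact hset z'
  · -- μ(P) ≤ l · cd(P)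
    have hzi : ∀ i, (D.codeg:ℝ) * (D.b i:ℝ) < ipair (D.A i) (fun j => ((z j : ℝ))) := by
      have := hz0
      rwa [D.interior_smul_pts hcr] at this
    have key : ∀ i, ((l:ℝ) * (D.codeg:ℝ))⁻¹
        ≤ D.dF i ((D.codeg:ℝ)⁻¹ • fun j => ((z j : ℝ))) := by
      intro i
      obtain ⟨B, hB⟩ := hint i
      rw [PolyDesc.dF, ipair_smul', ipair_cast']
      set N : ℤ := ∑ j, D.A i j * z j with hN
      have h1 : (D.codeg:ℝ) * (D.b i:ℝ) < (N:ℝ) := by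
        rw [hN, ← ipair_cast']
        exact hzi i
      have h2 : (((D.codeg : ℕ) : ℤ) * B : ℝ) < (((l : ℕ) : ℤ) * N : ℝ) := by
        push_cast
        nlinarith [hB]
      have h3 : ((D.codeg : ℕ) : ℤ) * B + 1 ≤ ((l : ℕ) : ℤ) * N :=
        Int.add_one_le_iff.mpr (by exact_mod_cast h2)
      have h4 : (D.codeg:ℝ) * (B:ℝ) + 1 ≤ (l:ℝ) * (N:ℝ) := by exact_mod_cast h3
      rw [← hB] at h4
      have e1 : (D.codeg:ℝ)⁻¹ * (N:ℝ) - (D.b i:ℝ)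
          = ((l:ℝ) * (D.codeg:ℝ))⁻¹
            * ((l:ℝ) * (N:ℝ) - (l:ℝ) * (D.codeg:ℝ) * (D.b i:ℝ)) := by
        field_simp
      rw [e1]
      calc ((l:ℝ) * (D.codeg:ℝ))⁻¹ = ((l:ℝ) * (D.codeg:ℝ))⁻¹ * 1 := by ring
        _ ≤ _ := mul_le_mul_of_nonneg_left (by nlinarith [h4]) (by positivity)
    have := D.qcd_le_of_forall (by positivity) key
    rwa [inv_inv] at this
  · -- lattice polytope case
    intro hlat
    obtain ⟨V, hV⟩ := hlat
    set b' : Fin m → ℤ := fun i => ⌈(D.b i : ℝ)⌉ with hb'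
    have hPP' : D.pts = {x : Fin n → ℝ | ∀ i, ((b' i : ℝ)) ≤ ipair (D.A i) x} := by
      apply Set.Subset.antisymm
      · rw [hV]
        apply convexHull_min
        · rintro v ⟨w, hw, rfl⟩
          intro i
          have hvP : (fun j => ((w j : ℝ))) ∈ D.pts := by
            rw [hV]
            exact subset_convexHull ℝ _ ⟨w, hw, rfl⟩
          have h1 : (D.b i:ℝ) ≤ ipair (D.A i) (fun j => ((w j : ℝ))) := hvP i
          rw [ipair_cast'] at h1 ⊢
          rw [hb']
          have h2 : ⌈(D.b i : ℝ)⌉ ≤ ∑ j, D.A i j * w j := Int.ceil_le.mpr h1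
          exact_mod_cast h2
        · exact convex_halfspaces' D.A _
      · intro x hx i
        exact le_trans (Int.le_ceil _) (hx i)
    have hz' : ∀ i, (D.codeg:ℝ) * ((b' i : ℤ):ℝ) < ipair (D.A i) (fun j => ((z j : ℝ))) := by
      have := hz0
      rw [hPP', smul_halfspaces' D.A _ hcr, interior_halfspaces' D.A D.A_ne_zero] at this
      exact this
    have key : ∀ i, ((D.codeg:ℝ))⁻¹
        ≤ D.dF i ((D.codeg:ℝ)⁻¹ • fun j => ((z j : ℝ))) := by
      intro i
      rw [PolyDesc.dF, ipair_smul', ipair_cast']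
      set N : ℤ := ∑ j, D.A i j * z j with hN
      have h1 : (D.codeg:ℝ) * ((b' i : ℤ):ℝ) < (N:ℝ) := by
        rw [hN, ← ipair_cast']
        exact hz' i
      have h2 : ((D.codeg : ℕ) : ℤ) * b' i + 1 ≤ N := by
        apply Int.add_one_le_iff.mpr
        exact_mod_cast h1
      have h3 : (D.codeg:ℝ) * ((b' i : ℤ):ℝ) + 1 ≤ (N:ℝ) := by exact_mod_cast h2
      have hbb : (D.b i : ℝ) ≤ ((b' i : ℤ):ℝ) := Int.le_ceil _
      have e1 : (D.codeg:ℝ)⁻¹ * (N:ℝ) - (D.b i:ℝ)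
          = (D.codeg:ℝ)⁻¹ * ((N:ℝ) - (D.codeg:ℝ) * (D.b i:ℝ)) := by
        field_simp
      rw [e1]
      calc (D.codeg:ℝ)⁻¹ = (D.codeg:ℝ)⁻¹ * 1 := by ring
        _ ≤ _ := mul_le_mul_of_nonneg_left (by nlinarith [h3, hbb, hcr]) (by positivity)
    have := D.qcd_le_of_forall (by positivity) key
    rwa [inv_inv] at this


end
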